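/- Consider m ≥ 2 sellers with signal set Σ and, for each ordered pair i ≠ j, a joint probability mass function p_{ij} on Σ × Σ with marginals p_i, p_j and correlation matrix Δ_{ij}(x,y) := p_{ij}(x,y) − p_i(x)·p_j(y). Suppose each Δ_{ij} satisfies the categorical sign condition: Δ_{ij}(x,x) ≥ 0 for all x and Δ_{ij}(x,y) ≤ 0 for all x ≠ y. Then for any row-stochastic strategy matrices θ_1, …, θ_m and any α > 0, β ∈ ℝ, each seller i's multi-seller expected payment satisfies α·Σ_{j ≠ i} ExpPay_{ij}(θ_i, θ_j) + β ≤ α·Σ_{j ≠ i} Σ_{x∈Σ} Δ_{ij}(x,x) + β, with equality when all sellers use the identity (truthful) strategy; i.e., truth-telling maximizes each seller's expected payment PayFunc(r_i; r_{−i}) = α·Σ_{j≠i} MIG(r_i, r_j) + β in the multi-seller extension of SMind. -/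

import Mathlib

open Finset

/-- The correlation matrix `Δ(x,y) = p(x,y) − p_A(x)·p_B(y)`. -/
noncomputable def Delta {S : Type} [Fintype S] (p : S → S → ℝ) (x y : S) : ℝ :=
  p x y - (∑ y' : S, p x y') * (∑ x' : S, p x' y)

/-- Expected Correlation-PP payment under strategies `θA`, `θB`. -/
noncomputable def ExpPay {S : Type} [Fintype S] (p : S → S → ℝ) (θA θB : S → S → ℝ) : ℝ :=
  ∑ a : S, ∑ x : S, ∑ y : S, θA x a * θB y a * Delta p x y

lemma key_le {S : Type} [Fintype S] [DecidableEq S] (p : S → S → ℝ)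
    (hdiag : ∀ x, 0 ≤ Delta p x x) (hoff : ∀ x y, x ≠ y → Delta p x y ≤ 0)
    (θA θB : S → S → ℝ) (hA0 : ∀ x a, 0 ≤ θA x a) (hB0 : ∀ x a, 0 ≤ θB x a)
    (hA1 : ∀ x, ∑ a, θA x a = 1) (hB1 : ∀ x, ∑ a, θB x a = 1) :
    ExpPay p θA θB ≤ ∑ x : S, Delta p x x := by
  have hBle : ∀ x a, θB x a ≤ 1 := fun x a => by
    calc θB x a ≤ ∑ a', θB x a' :=
          Finset.single_le_sum (fun a' _ => hB0 x a') (mem_univ a)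
      _ = 1 := hB1 x
  have step1 : ExpPay p θA θB ≤ ∑ a : S, ∑ x : S, θA x a * θB x a * Delta p x x := by
    unfold ExpPay
    refine Finset.sum_le_sum fun a _ => Finset.sum_le_sum fun x _ => ?_
    have h : ∑ y : S, θA x a * θB y a * Delta p x y
        ≤ ∑ y : S, (if y = x then θA x a * θB x a * Delta p x x else 0) := by
      refine Finset.sum_le_sum fun y _ => ?_
      by_cases h : y = x
      · subst h; simp
      · simp only [h, if_false]
        exact mul_nonpos_of_nonneg_of_nonpos (mul_nonneg (hA0 x a) (hB0 y a))
          (hoff x y (Ne.symm h))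
    simpa using h
  refine step1.trans ?_
  rw [Finset.sum_comm]
  refine Finset.sum_le_sum fun x _ => ?_
  calc ∑ a : S, θA x a * θB x a * Delta p x x
      = (∑ a : S, θA x a * θB x a) * Delta p x x := by rw [Finset.sum_mul]
    _ ≤ 1 * Delta p x x := by
        refine mul_le_mul_of_nonneg_right ?_ (hdiag x)
        calc ∑ a : S, θA x a * θB x a ≤ ∑ a : S, θA x a * 1 :=
              Finset.sum_le_sum fun a _ => mul_le_mul_of_nonneg_left (hBle x a) (hA0 x a)
          _ = 1 := by simp [hA1 x]
    _ = Delta p x x := one_mul _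

lemma key_eq {S : Type} [Fintype S] [DecidableEq S] (p : S → S → ℝ) :
    ExpPay p (fun x a => if a = x then (1 : ℝ) else 0)
      (fun x a => if a = x then (1 : ℝ) else 0) = ∑ x : S, Delta p x x := by
  unfold ExpPay
  simp [ite_mul, mul_ite]

/-- Multi-seller extension of SMind: with `m ≥ 2` sellers, pairwise joint pmfs whose
correlation matrices satisfy the categorical sign condition, and payment
`α·∑_{j≠i} MIG(r_i, r_j) + β`, every strategy profile gives each seller expected payment
at most the truth-telling payment, with equality when all sellers use the identity
(truthful) strategy. -/
theorem stmt_13 (S : Type) [Fintype S] [Nonempty S] [DecidableEq S]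
    (m : ℕ) (hm : 2 ≤ m)
    (p : Fin m → Fin m → S → S → ℝ)
    (hp0 : ∀ i j, i ≠ j → ∀ x y, 0 ≤ p i j x y)
    (hp1 : ∀ i j, i ≠ j → ∑ x : S, ∑ y : S, p i j x y = 1)
    (hdiag : ∀ i j, i ≠ j → ∀ x : S, 0 ≤ Delta (p i j) x x)
    (hoff : ∀ i j, i ≠ j → ∀ x y : S, x ≠ y → Delta (p i j) x y ≤ 0)
    (θ : Fin m → S → S → ℝ)
    (hθ0 : ∀ i x a, 0 ≤ θ i x a) (hθ1 : ∀ i x, ∑ a : S, θ i x a = 1)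
    (α β : ℝ) (hα : 0 < α) :
    (∀ i : Fin m,
        α * (∑ j ∈ Finset.univ.filter (fun j => j ≠ i), ExpPay (p i j) (θ i) (θ j)) + β
          ≤ α * (∑ j ∈ Finset.univ.filter (fun j => j ≠ i),
                ∑ x : S, Delta (p i j) x x) + β) ∧
    (∀ i : Fin m,
        α * (∑ j ∈ Finset.univ.filter (fun j => j ≠ i),
              ExpPay (p i j) (fun x a => if a = x then (1 : ℝ) else 0)
                (fun x a => if a = x then (1 : ℝ) else 0)) + β
          = α * (∑ j ∈ Finset.univ.filter (fun j => j ≠ i),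
                ∑ x : S, Delta (p i j) x x) + β) := by
  constructor
  · intro i
    refine add_le_add_left (mul_le_mul_of_nonneg_left ?_ hα.le) β
    refine Finset.sum_le_sum fun j hj => ?_
    have hij : i ≠ j := (Finset.mem_filter.mp hj).2.symm
    exact key_le (p i j) (hdiag i j hij) (hoff i j hij) (θ i) (θ j)
      (hθ0 i) (hθ0 j) (hθ1 i) (hθ1 j)
  · intro i
    congr 2
    exact Finset.sum_congr rfl fun j _ => key_eq (p i j)
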